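/- (Descent of the doubled Lift and Projection step.) Let F : ℝ^ℓ → ℝ be twice continuously differentiable, let B ∈ ℝ^{ℓ×ℓ} be symmetric positive definite, and suppose vᵀ Hess F(ξ) v ≤ vᵀ B v for all v ∈ ℝ^ℓ and all ξ on the segment between x and x + p, where p = −2 B⁻¹ ∇F(x). Then F(x + p) ≤ F(x). -/

import Mathlib

open Matrix

/-- descent of the doubled Lift and Projection step:
if `F` is `C²`, `B` is symmetric positive definite, and `vᵀ Hess F(ξ) v ≤ vᵀ B v` for all
`v` and all `ξ` on the segment from `x` to `x + p`, where `p = −2 B⁻¹ ∇F(x)`, then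
`F(x+p) ≤ F(x)`.  The Hessian quadratic form at `ξ` in direction `v` is the directional
derivative `D(y ↦ DF(y)[v])(ξ)[v]`, and the gradient has components `g i = DF(x)[eᵢ]`. -/
theorem doubled_lift_and_projection_descent {ℓ : ℕ}
    (F : (Fin ℓ → ℝ) → ℝ) (hF : ContDiff ℝ 2 F)
    (B : Matrix (Fin ℓ) (Fin ℓ) ℝ) (hBsymm : B.IsSymm) (hBpd : B.PosDef)
    (x : Fin ℓ → ℝ)
    (g : Fin ℓ → ℝ) (hg : ∀ i, g i = fderiv ℝ F x (Pi.single i 1))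
    (p : Fin ℓ → ℝ) (hp : p = -((2 : ℝ) • (B⁻¹ *ᵥ g)))
    (hHess : ∀ ξ ∈ segment ℝ x (x + p), ∀ v : Fin ℓ → ℝ,
        fderiv ℝ (fun y => fderiv ℝ F y v) ξ v ≤ v ⬝ᵥ B *ᵥ v) :
    F (x + p) ≤ F x := by
  classical
  set γ : ℝ → (Fin ℓ → ℝ) := fun t => x + t • p with hγdef
  have hγd : ∀ t : ℝ, HasDerivAt γ p t := by
    intro t
    simpa [hγdef] using ((hasDerivAt_id t).smul_const p).const_add x
  have hγmem : ∀ t ∈ Set.Icc (0:ℝ) 1, γ t ∈ segment ℝ x (x + p) := by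
    intro t ht
    rw [segment_eq_image']
    exact ⟨t, ht, by simp [hγdef]⟩
  have hFd : Differentiable ℝ F := hF.differentiable (by norm_num)
  set G : (Fin ℓ → ℝ) → ℝ := fun y => fderiv ℝ F y p with hGdef
  have hG : ContDiff ℝ 1 G :=
    ContDiff.clm_apply (hF.fderiv_right (by norm_num)) contDiff_const
  have hGd : Differentiable ℝ G := hG.differentiable (by norm_num)
  -- derivative of φ = F ∘ γ
  have hφd : ∀ t : ℝ, HasDerivAt (fun s => F (γ s)) (G (γ t)) t := by
    intro t
    exact ((hFd (γ t)).hasFDerivAt).comp_hasDerivAt t (hγd t)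
  -- derivative of G ∘ γ
  have hψd : ∀ t : ℝ, HasDerivAt (fun s => G (γ s))
      (fderiv ℝ (fun y => fderiv ℝ F y p) (γ t) p) t := by
    intro t
    exact ((hGd (γ t)).hasFDerivAt).comp_hasDerivAt t (hγd t)
  set K : ℝ := p ⬝ᵥ B *ᵥ p with hKdef
  have hbound : ∀ t ∈ Set.Icc (0:ℝ) 1,
      fderiv ℝ (fun y => fderiv ℝ F y p) (γ t) p ≤ K :=
    fun t ht => hHess (γ t) (hγmem t ht) p
  -- Step 1: G (γ t) ≤ G x + K * t on [0,1]
  have hstep1 : ∀ t ∈ Set.Icc (0:ℝ) 1, G (γ t) ≤ G x + K * t := by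
    have hanti : AntitoneOn (fun t => G (γ t) - K * t) (Set.Icc 0 1) := by
      apply antitoneOn_of_deriv_nonpos (convex_Icc 0 1)
      · have hγc : Continuous γ := continuous_const.add (continuous_id.smul continuous_const)
        exact Continuous.continuousOn
          (((hG.continuous).comp hγc).sub (continuous_const.mul continuous_id))
      · intro t _
        exact (((hψd t).sub ((hasDerivAt_id' t).const_mul K)).differentiableAt).differentiableWithinAt
      · intro t ht
        rw [interior_Icc] at ht
        have hd := (hψd t).sub ((hasDerivAt_id' t).const_mul K)
        rw [(show HasDerivAt (fun t => G (γ t) - K * t) _ t from hd).deriv]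
        have := hbound t (Set.mem_Icc_of_Ioo ht)
        simpa using sub_nonpos.2 this
    intro t ht
    have h0 : (0:ℝ) ∈ Set.Icc (0:ℝ) 1 := by norm_num
    have := hanti h0 ht ht.1
    have hγ0 : γ 0 = x := by simp [hγdef]
    simp only [hγ0, mul_zero, sub_zero] at this
    linarith
  -- Step 2: F (γ 1) ≤ F x + G x + K / 2
  have hstep2 : F (γ 1) ≤ F (γ 0) + G x + K / 2 := by
    have hanti : AntitoneOn (fun t => F (γ t) - (G x * t + K * t ^ 2 / 2))
        (Set.Icc 0 1) := by
      apply antitoneOn_of_deriv_nonpos (convex_Icc 0 1)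
      · have hγc : Continuous γ := continuous_const.add (continuous_id.smul continuous_const)
        exact Continuous.continuousOn (((hFd.continuous).comp hγc).sub
          ((continuous_const.mul continuous_id).add
            ((continuous_const.mul (continuous_pow 2)).div_const 2)))
      · intro t _
        have hd : HasDerivAt (fun t => F (γ t) - (G x * t + K * t ^ 2 / 2))
            (G (γ t) - (G x + K * t)) t := by
          have h1 : HasDerivAt (fun t : ℝ => G x * t + K * t ^ 2 / 2)
              (G x + K * t) t := by
            have := (((hasDerivAt_pow 2 t).const_mul K).div_const 2).const_add (G x * t)
            have h2 : HasDerivAt (fun s : ℝ => G x * s) (G x) t := by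
              simpa using (hasDerivAt_id t).const_mul (G x)
            exact ((h2.add (((hasDerivAt_pow 2 t).const_mul K).div_const 2) :
              HasDerivAt (fun t : ℝ => G x * t + K * t ^ 2 / 2) _ t)).congr_deriv
                (by rw [show (2:ℕ) - 1 = 1 from rfl]; push_cast; ring)
          exact (hφd t).sub h1
        exact hd.differentiableAt.differentiableWithinAt
      · intro t ht
        rw [interior_Icc] at ht
        have h1 : HasDerivAt (fun t : ℝ => G x * t + K * t ^ 2 / 2)
            (G x + K * t) t := by
          have h2 : HasDerivAt (fun s : ℝ => G x * s) (G x) t := by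
            simpa using (hasDerivAt_id t).const_mul (G x)
          exact ((h2.add (((hasDerivAt_pow 2 t).const_mul K).div_const 2) :
            HasDerivAt (fun t : ℝ => G x * t + K * t ^ 2 / 2) _ t)).congr_deriv
              (by rw [show (2:ℕ) - 1 = 1 from rfl]; push_cast; ring)
        rw [(show HasDerivAt (fun t => F (γ t) - (G x * t + K * t ^ 2 / 2)) _ t from (hφd t).sub h1).deriv]
        exact sub_nonpos.2 (hstep1 t (Set.mem_Icc_of_Ioo ht))
    have h0 : (0:ℝ) ∈ Set.Icc (0:ℝ) 1 := by norm_num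
    have h1 : (1:ℝ) ∈ Set.Icc (0:ℝ) 1 := by norm_num
    have := hanti h0 h1 (by norm_num)
    simp only [mul_zero, mul_one, one_pow, zero_pow, pow_two] at this
    nlinarith [this]
  -- Now compute G x + K / 2 = 0
  have hGx : G x = p ⬝ᵥ g := by
    have := LinearMap.pi_apply_eq_sum_univ ((fderiv ℝ F x) : (Fin ℓ → ℝ) →ₗ[ℝ] ℝ) p
    simp only [ContinuousLinearMap.coe_coe] at this
    rw [hGdef]
    simp only [this, dotProduct, smul_eq_mul]
    refine Finset.sum_congr rfl fun i _ => ?_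
    rw [hg i]
    have he : (fun j => if i = j then (1:ℝ) else 0) = Pi.single i 1 := by
      funext j; simp [Pi.single_apply, eq_comm]
    rw [he]
  have hBinv : B *ᵥ (B⁻¹ *ᵥ g) = g := by
    rw [Matrix.mulVec_mulVec, Matrix.mul_nonsing_inv B
      (isUnit_iff_ne_zero.2 (ne_of_gt hBpd.det_pos)), Matrix.one_mulVec]
  have hzero : G x + K / 2 = 0 := by
    rw [hGx, hKdef, hp]
    simp only [neg_dotProduct, dotProduct_neg, smul_dotProduct,
      dotProduct_smul, Matrix.mulVec_neg, Matrix.mulVec_smul, hBinv,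
      smul_eq_mul]
    ring
  have hγ0 : γ 0 = x := by simp [hγdef]
  have hγ1 : γ 1 = x + p := by simp [hγdef]
  rw [hγ0, hγ1] at hstep2
  linarith
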